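/- Let Y be countably infinite, G = (⊕_{x∈ℕ}ℤ₂)^Y acting coordinatewise on (2^ℕ)^Y, Γ ≤ G the subgroup of elements with all but finitely many coordinates the identity. Let D ⊆ (2^ℕ)^Y be dense open and ζ ∈ (2^ℕ)^Y. Assume that for every finite Y₀ ⊆ Y and every γ ∈ Γ, the fiber D_{γ·ζ↾Y₀} = {b ∈ (2^ℕ)^{Y∖Y₀} : (γ·ζ↾Y₀, b) ∈ D} is nonempty. Then {g ∈ G : g·ζ ∈ D} is dense open in G. -/
import Mathlib


/-- The group `⊕_{n∈ℕ}ℤ₂` of finitely supported sequences, with the discrete topology. -/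
local instance : TopologicalSpace (ℕ →₀ ZMod 2) := ⊥

/-- Permutation lemma (dense open case): if `D ⊆ (2^ℕ)^Y` is dense open, `ζ ∈ (2^ℕ)^Y`,
and for every finite `Y₀ ⊆ Y` and every finite-support `γ ∈ Γ ≤ G = (⊕ℤ₂)^Y` the fiber of
`D` over `γ·ζ↾Y₀` is nonempty, then `{g ∈ G : g·ζ ∈ D}` is dense open in `G`. -/
theorem permutation_lemma_dense_open {Y : Type*} [Countable Y] [Infinite Y]
    (D : Set (Y → ℕ → ZMod 2)) (hDopen : IsOpen D) (hDdense : Dense D)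
    (ζ : Y → ℕ → ZMod 2)
    (hfib : ∀ (Y₀ : Finset Y) (γ : Y → ℕ →₀ ZMod 2), {y | γ y ≠ 0}.Finite →
      ∃ b ∈ D, ∀ y ∈ Y₀, b y = fun i => γ y i + ζ y i) :
    IsOpen {g : Y → ℕ →₀ ZMod 2 | (fun y i => g y i + ζ y i) ∈ D} ∧
    Dense {g : Y → ℕ →₀ ZMod 2 | (fun y i => g y i + ζ y i) ∈ D} := by
  classical
  constructor
  · have hd : DiscreteTopology (ℕ →₀ ZMod 2) := ⟨rfl⟩
    have hc : Continuous (fun (g : Y → ℕ →₀ ZMod 2) => (fun y i => g y i + ζ y i : Y → ℕ → ZMod 2)) := by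
      apply continuous_pi
      intro y
      exact Continuous.comp
        (continuous_of_discreteTopology :
          Continuous fun (f : ℕ →₀ ZMod 2) => (fun i => f i + ζ y i : ℕ → ZMod 2))
        (continuous_apply y)
    exact hDopen.preimage hc
  · rw [dense_iff_inter_open]
    intro U hU hUne
    obtain ⟨g₀, hg₀⟩ := hUne
    obtain ⟨I, u, hu, hsub⟩ := isOpen_pi_iff.mp hU g₀ hg₀
    set γ : Y → ℕ →₀ ZMod 2 := fun y => if y ∈ I then g₀ y else 0 with hγ
    have hγfin : {y | γ y ≠ 0}.Finite := Set.Finite.subset I.finite_toSet (by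
      intro y hy
      by_contra h
      have h' : y ∉ I := fun hh => h hh
      exact hy (if_neg h'))
    obtain ⟨b, hbD, hb⟩ := hfib I γ hγfin
    obtain ⟨J, v, hv, hvsub⟩ := isOpen_pi_iff.mp hDopen b hbD
    have key : ∀ y ∈ J, ∃ (K : Finset ℕ) (w : ℕ → Set (ZMod 2)),
        (∀ i ∈ K, b y i ∈ w i) ∧ Set.pi ↑K w ⊆ v y := by
      intro y hy
      obtain ⟨K, w, hw, hwsub⟩ := isOpen_pi_iff.mp (hv y hy).1 (b y) (hv y hy).2
      exact ⟨K, w, fun i hi => (hw i hi).2, hwsub⟩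
    choose! K w hKw hKsub using key
    set g : Y → ℕ →₀ ZMod 2 := fun y =>
      if y ∈ I then g₀ y
      else Finsupp.onFinset (K y) (fun i => if i ∈ K y then b y i - ζ y i else 0)
        (fun i hi => by by_contra h; simp [h] at hi) with hg
    refine ⟨g, hsub ?_, ?_⟩
    · intro y hy
      have hyI : y ∈ I := hy
      have : g y = g₀ y := by simp only [g, if_pos hyI]
      rw [this]
      exact (hu y hyI).2
    · apply hvsub
      intro y hy
      have hyJ : y ∈ J := hy
      by_cases hyI : y ∈ I
      · have hgy : (fun i => g y i + ζ y i) = b y := by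
          funext i
          have h1 : g y = g₀ y := by simp only [g, if_pos hyI]
          have h2 : b y = fun i => γ y i + ζ y i := hb y hyI
          simp only [h1, h2, γ, if_pos hyI]
        show (fun i => g y i + ζ y i) ∈ v y
        rw [hgy]
        exact (hv y hyJ).2
      · apply hKsub y hyJ
        intro i hi
        have h1 : g y = Finsupp.onFinset (K y) (fun i => if i ∈ K y then b y i - ζ y i else 0)
            (fun i hi => by by_contra h; simp [h] at hi) := by simp only [g, if_neg hyI]
        have hiK : i ∈ K y := hi
        show g y i + ζ y i ∈ w y i
        rw [h1]
        rw [Finsupp.onFinset_apply]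
        simp only [if_pos hiK, sub_add_cancel]
        exact hKw y hyJ i hiK
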